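/- arXiv:2205.05004 — 2 statements merged into one kernel-verified Lean document; each statement's English description precedes it below -/
import Mathlib

section
/- Let G = (V, w) be a weighted graph and u, v distinct nodes with w(u,v) ≥ 0. Then ν_G({u,v}) ≥ max( ν̂_f(u,v), ν̂_s(u,v) ), where ν̂_f(u,v) = 2|w(u,v)| − min(‖w^(u)‖, ‖w^(v)‖) is the fast score and ν̂_s(u,v) = 2|w(u,v)| − (1/2)·Σ_{z∈V} |w(u,z) − w(v,z)| is the similarity score. In particular, if max(ν̂_f(u,v), ν̂_s(u,v)) > 0 then {u,v} is non-separable. -/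
open Finset

variable {V : Type*}

/-- Cut capacity of a cut `S` in the weighted graph `(V, w)`:
`c(S) = Σ_{u ∈ S, v ∈ V \ S} w(u,v)`. -/
noncomputable def cutVal [Fintype V] [DecidableEq V] (w : V → V → ℝ) (S : Finset V) : ℝ :=
  ∑ u ∈ S, ∑ v ∈ Sᶜ, w u v

/-- Minimum cut value `MC(G) = min_{S ⊆ V} c(S)` (cuts range over all subsets). -/
noncomputable def minCutVal [Fintype V] [DecidableEq V] (w : V → V → ℝ) : ℝ :=
  sInf (Set.range (cutVal w))

/-- `S` separates `X` iff `X ∩ S ∉ {∅, X}`. -/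
def Separates [DecidableEq V] (S X : Finset V) : Prop :=
  X ∩ S ≠ ∅ ∧ X ∩ S ≠ X

/-- `X` is non-separable: no min-cut separates `X`. -/
def NonSepSet [Fintype V] [DecidableEq V] (w : V → V → ℝ) (X : Finset V) : Prop :=
  ∀ S : Finset V, cutVal w S = minCutVal w → ¬ Separates S X

/-- `X` is weakly non-separable: some min-cut separates `X` and some min-cut does not. -/
def WeakNonSepSet [Fintype V] [DecidableEq V] (w : V → V → ℝ) (X : Finset V) : Prop :=
  (∃ S : Finset V, cutVal w S = minCutVal w ∧ Separates S X) ∧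
  (∃ S : Finset V, cutVal w S = minCutVal w ∧ ¬ Separates S X)

/-- Non-separability index
`ν_G(X) = min_{S ⊆ V, S ⊖ X} c(S) − min_{S ⊆ V, ¬(S ⊖ X)} c(S)`. -/
noncomputable def nuIdx [Fintype V] [DecidableEq V] (w : V → V → ℝ) (X : Finset V) : ℝ :=
  sInf (cutVal w '' {S : Finset V | Separates S X}) -
  sInf (cutVal w '' {S : Finset V | ¬ Separates S X})

set_option linter.unusedSectionVars false
section aux
variable [Fintype V] [DecidableEq V]

lemma cutVal_compl (w : V → V → ℝ) (hsymm : ∀ a b, w a b = w b a) (S : Finset V) :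
    cutVal w Sᶜ = cutVal w S := by
  unfold cutVal
  rw [compl_compl, Finset.sum_comm]
  exact Finset.sum_congr rfl fun a _ => Finset.sum_congr rfl fun b _ => hsymm _ _

lemma cutVal_erase (w : V → V → ℝ) (hsymm : ∀ a b, w a b = w b a) (S : Finset V) (u : V)
    (hu : u ∈ S) :
    cutVal w S = cutVal w (S.erase u) + (∑ b ∈ Sᶜ, w u b - ∑ a ∈ S.erase u, w u a) := by
  unfold cutVal
  have h1 : ∑ a ∈ S, ∑ b ∈ Sᶜ, w a b
      = ∑ a ∈ S.erase u, ∑ b ∈ Sᶜ, w a b + ∑ b ∈ Sᶜ, w u b :=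
    (Finset.sum_erase_add S _ hu).symm
  have hcompl : (S.erase u)ᶜ = insert u Sᶜ := by
    ext z; simp [Finset.mem_erase, Finset.mem_compl, Finset.mem_insert]
  have hu' : u ∉ Sᶜ := by simp [hu]
  have h2 : ∀ a ∈ S.erase u, ∑ b ∈ (S.erase u)ᶜ, w a b = w a u + ∑ b ∈ Sᶜ, w a b := by
    intro a _; rw [hcompl, Finset.sum_insert hu']
  rw [h1, Finset.sum_congr rfl h2, Finset.sum_add_distrib]
  have h3 : ∑ a ∈ S.erase u, w a u = ∑ a ∈ S.erase u, w u a :=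
    Finset.sum_congr rfl fun a _ => hsymm a u
  rw [h3]; ring

lemma cutVal_insert (w : V → V → ℝ) (hsymm : ∀ a b, w a b = w b a) (S : Finset V) (v : V)
    (hv : v ∉ S) :
    cutVal w S = cutVal w (insert v S) + (∑ a ∈ S, w v a - ∑ b ∈ Sᶜ.erase v, w v b) := by
  have hvc : v ∈ Sᶜ := by simp [hv]
  have h := cutVal_erase w hsymm Sᶜ v hvc
  rw [compl_compl] at h
  have hc : Sᶜ.erase v = (insert v S)ᶜ := by
    ext z; simp [Finset.mem_erase, Finset.mem_compl, Finset.mem_insert]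
  rw [cutVal_compl w hsymm S,
    show cutVal w (Sᶜ.erase v) = cutVal w (insert v S) by rw [hc, cutVal_compl w hsymm]] at h
  exact h

lemma sum_helper (f : V → ℝ) (T1 T2 R : Finset V) (h1 : T1 ⊆ R) (h2 : T2 ⊆ R)
    (hd : Disjoint T1 T2) :
    -∑ z ∈ R, |f z| ≤ ∑ z ∈ T2, f z - ∑ z ∈ T1, f z := by
  have e1 : ∑ z ∈ T2, -|f z| ≤ ∑ z ∈ T2, f z :=
    Finset.sum_le_sum fun i _ => neg_abs_le _
  rw [Finset.sum_neg_distrib] at e1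
  have e2 : ∑ z ∈ T1, f z ≤ ∑ z ∈ T1, |f z| := Finset.sum_le_sum fun i _ => le_abs_self _
  have e3 : ∑ z ∈ T1, |f z| + ∑ z ∈ T2, |f z| ≤ ∑ z ∈ R, |f z| := by
    rw [← Finset.sum_union hd]
    exact Finset.sum_le_sum_of_subset_of_nonneg (Finset.union_subset h1 h2)
      (fun i _ _ => abs_nonneg _)
  linarith

end aux

section key
variable [Fintype V] [DecidableEq V]

lemma key_ineq (w : V → V → ℝ) (hsymm : ∀ a b, w a b = w b a) (hdiag : ∀ a, w a a = 0)
    (u v : V) (huv : u ≠ v) (hw : 0 ≤ w u v)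
    (m : ℝ) (hm : ∀ T : Finset V, ¬ Separates T {u, v} → m ≤ cutVal w T)
    (S : Finset V) (hu : u ∈ S) (hv : v ∉ S) :
    max (2 * |w u v| - min (∑ z, |w u z|) (∑ z, |w v z|))
        (2 * |w u v| - (1 / 2) * ∑ z, |w u z - w v z|) + m ≤ cutVal w S := by
  have hvc : v ∈ Sᶜ := by simp [hv]
  have huc : u ∉ Sᶜ := by simp [hu]
  -- cut value decompositions
  have hErase : cutVal w S = cutVal w (S.erase u)
      + (w u v + (∑ b ∈ Sᶜ.erase v, w u b - ∑ a ∈ S.erase u, w u a)) := by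
    rw [cutVal_erase w hsymm S u hu, ← Finset.sum_erase_add Sᶜ (w u) hvc]; ring
  have hInsert : cutVal w S = cutVal w (insert v S)
      + (w v u + (∑ a ∈ S.erase u, w v a - ∑ b ∈ Sᶜ.erase v, w v b)) := by
    rw [cutVal_insert w hsymm S v hv, ← Finset.sum_erase_add S (w v) hu]; ring
  -- erase and insert are non-separating
  have hns1 : ¬ Separates (S.erase u) ({u, v} : Finset V) := by
    intro h
    apply h.1
    rw [Finset.eq_empty_iff_forall_notMem]
    intro z hz
    simp only [Finset.mem_inter, Finset.mem_insert, Finset.mem_singleton,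
      Finset.mem_erase] at hz
    rcases hz.1 with rfl | rfl
    · exact hz.2.1 rfl
    · exact hv hz.2.2
  have hns2 : ¬ Separates (insert v S) ({u, v} : Finset V) := by
    intro h
    apply h.2
    apply Finset.inter_eq_left.mpr
    intro z hz
    simp only [Finset.mem_insert, Finset.mem_singleton] at hz
    rcases hz with rfl | rfl
    · exact Finset.mem_insert_of_mem hu
    · exact Finset.mem_insert_self _ _
  have hm1 : m ≤ cutVal w (S.erase u) := hm _ hns1
  have hm2 : m ≤ cutVal w (insert v S) := hm _ hns2
  -- subset relations
  have hsub1 : S.erase u ⊆ ({u, v} : Finset V)ᶜ := by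
    intro z hz
    simp only [Finset.mem_erase] at hz
    simp only [Finset.mem_compl, Finset.mem_insert, Finset.mem_singleton]
    push_neg
    exact ⟨hz.1, fun h => hv (h ▸ hz.2)⟩
  have hsub2 : Sᶜ.erase v ⊆ ({u, v} : Finset V)ᶜ := by
    intro z hz
    simp only [Finset.mem_erase, Finset.mem_compl] at hz
    simp only [Finset.mem_compl, Finset.mem_insert, Finset.mem_singleton]
    push_neg
    exact ⟨fun h => hz.2 (h ▸ hu), hz.1⟩
  have hdisj : Disjoint (S.erase u) (Sᶜ.erase v) := by
    apply Finset.disjoint_left.mpr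
    intro z hz1 hz2
    simp only [Finset.mem_erase] at hz1
    simp only [Finset.mem_erase, Finset.mem_compl] at hz2
    exact hz2.2 hz1.2
  -- lower bounds on the correction terms
  have bA : -∑ z ∈ ({u, v} : Finset V)ᶜ, |w u z|
      ≤ ∑ b ∈ Sᶜ.erase v, w u b - ∑ a ∈ S.erase u, w u a :=
    sum_helper _ _ _ _ hsub1 hsub2 hdisj
  have bB : -∑ z ∈ ({u, v} : Finset V)ᶜ, |w v z|
      ≤ ∑ a ∈ S.erase u, w v a - ∑ b ∈ Sᶜ.erase v, w v b :=
    sum_helper _ _ _ _ hsub2 hsub1 hdisj.symm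
  have bD : -∑ z ∈ ({u, v} : Finset V)ᶜ, |w u z - w v z| ≤
      (∑ b ∈ Sᶜ.erase v, (w u b - w v b)) - ∑ a ∈ S.erase u, (w u a - w v a) :=
    sum_helper _ _ _ _ hsub1 hsub2 hdisj
  -- totals over the complement of {u, v}
  have habs : |w u v| = w u v := abs_of_nonneg hw
  have hpairu : ∑ z ∈ ({u, v} : Finset V), |w u z| = |w u v| := by
    rw [Finset.sum_pair huv, hdiag, abs_zero, zero_add]
  have hpairv : ∑ z ∈ ({u, v} : Finset V), |w v z| = |w u v| := by
    rw [Finset.sum_pair huv, hdiag, abs_zero, add_zero, hsymm v u]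
  have hpaird : ∑ z ∈ ({u, v} : Finset V), |w u z - w v z| = 2 * |w u v| := by
    rw [Finset.sum_pair huv, hdiag, hdiag, zero_sub, sub_zero, abs_neg, hsymm v u]
    ring
  have hRu : ∑ z ∈ ({u, v} : Finset V)ᶜ, |w u z| = (∑ z, |w u z|) - |w u v| := by
    have := Finset.sum_add_sum_compl ({u, v} : Finset V) (fun z => |w u z|)
    rw [hpairu] at this; linarith
  have hRv : ∑ z ∈ ({u, v} : Finset V)ᶜ, |w v z| = (∑ z, |w v z|) - |w u v| := by
    have := Finset.sum_add_sum_compl ({u, v} : Finset V) (fun z => |w v z|)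
    rw [hpairv] at this; linarith
  have hRd : ∑ z ∈ ({u, v} : Finset V)ᶜ, |w u z - w v z|
      = (∑ z, |w u z - w v z|) - 2 * |w u v| := by
    have := Finset.sum_add_sum_compl ({u, v} : Finset V) (fun z => |w u z - w v z|)
    rw [hpaird] at this; linarith
  have hsplit : (∑ b ∈ Sᶜ.erase v, (w u b - w v b)) - ∑ a ∈ S.erase u, (w u a - w v a)
      = (∑ b ∈ Sᶜ.erase v, w u b - ∑ a ∈ S.erase u, w u a)
        + (∑ a ∈ S.erase u, w v a - ∑ b ∈ Sᶜ.erase v, w v b) := by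
    rw [Finset.sum_sub_distrib, Finset.sum_sub_distrib]; ring
  rw [hsplit] at bD
  have hwvu : w v u = w u v := hsymm v u
  rw [← le_sub_iff_add_le]
  apply max_le
  · rcases le_total (∑ z, |w u z|) (∑ z, |w v z|) with hle | hle
    · rw [min_eq_left hle]; linarith
    · rw [min_eq_right hle]; linarith
  · linarith

end key

section main
variable [Fintype V] [DecidableEq V]

lemma sep_pair_cases {S : Finset V} {u v : V} (huv : u ≠ v)
    (h : Separates S {u, v}) : (u ∈ S ∧ v ∉ S) ∨ (v ∈ S ∧ u ∉ S) := by
  obtain ⟨h1, h2⟩ := h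
  by_cases hu : u ∈ S <;> by_cases hv : v ∈ S
  · exfalso
    apply h2
    apply Finset.inter_eq_left.mpr
    intro z hz
    simp only [Finset.mem_insert, Finset.mem_singleton] at hz
    rcases hz with rfl | rfl <;> assumption
  · exact Or.inl ⟨hu, hv⟩
  · exact Or.inr ⟨hv, hu⟩
  · exfalso
    apply h1
    rw [Finset.eq_empty_iff_forall_notMem]
    intro z hz
    simp only [Finset.mem_inter, Finset.mem_insert, Finset.mem_singleton] at hz
    rcases hz.1 with rfl | rfl
    · exact hu hz.2
    · exact hv hz.2

lemma nuhat_symm (w : V → V → ℝ) (hsymm : ∀ a b, w a b = w b a) (u v : V) :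
    max (2 * |w u v| - min (∑ z, |w u z|) (∑ z, |w v z|))
        (2 * |w u v| - (1 / 2) * ∑ z, |w u z - w v z|)
    = max (2 * |w v u| - min (∑ z, |w v z|) (∑ z, |w u z|))
        (2 * |w v u| - (1 / 2) * ∑ z, |w v z - w u z|) := by
  have h1 : (∑ z, |w u z - w v z|) = ∑ z, |w v z - w u z| :=
    Finset.sum_congr rfl fun z _ => abs_sub_comm _ _
  rw [hsymm u v, min_comm, h1]
end main

/-- for `w(u,v) ≥ 0`, `ν_G({u,v}) ≥ max(ν̂_f(u,v), ν̂_s(u,v))` where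
`ν̂_f(u,v) = 2|w(u,v)| − min(‖w⁽ᵘ⁾‖, ‖w⁽ᵛ⁾‖)` and
`ν̂_s(u,v) = 2|w(u,v)| − ½ Σ_z |w(u,z) − w(v,z)|`; in particular if the max is positive
then `{u,v}` is non-separable. -/
theorem statement_16 [Fintype V] [DecidableEq V] [Nonempty V]
    (w : V → V → ℝ) (hsymm : ∀ a b, w a b = w b a) (hdiag : ∀ a, w a a = 0)
    (u v : V) (huv : u ≠ v) (hw : 0 ≤ w u v) :
    max (2 * |w u v| - min (∑ z, |w u z|) (∑ z, |w v z|))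
        (2 * |w u v| - (1 / 2) * ∑ z, |w u z - w v z|) ≤ nuIdx w {u, v} ∧
    (0 < max (2 * |w u v| - min (∑ z, |w u z|) (∑ z, |w v z|))
             (2 * |w u v| - (1 / 2) * ∑ z, |w u z - w v z|) →
      NonSepSet w {u, v}) := by
  classical
  set X : Finset V := {u, v} with hX
  have hfin2 : (cutVal w '' {S : Finset V | ¬ Separates S X}).Finite :=
    (Set.toFinite _).image _
  have hfin1 : (cutVal w '' {S : Finset V | Separates S X}).Finite :=
    (Set.toFinite _).image _
  have hns_empty : ¬ Separates (∅ : Finset V) X := by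
    intro h
    exact h.1 (by simp)
  have hne2 : (cutVal w '' {S : Finset V | ¬ Separates S X}).Nonempty :=
    ⟨cutVal w ∅, ∅, hns_empty, rfl⟩
  set m : ℝ := sInf (cutVal w '' {S : Finset V | ¬ Separates S X}) with hmdef
  have hm : ∀ T : Finset V, ¬ Separates T X → m ≤ cutVal w T := by
    intro T hT
    exact csInf_le hfin2.bddBelow ⟨T, hT, rfl⟩
  set ν : ℝ := max (2 * |w u v| - min (∑ z, |w u z|) (∑ z, |w v z|))
        (2 * |w u v| - (1 / 2) * ∑ z, |w u z - w v z|) with hνdef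
  have hkey : ∀ S : Finset V, Separates S X → ν + m ≤ cutVal w S := by
    intro S hS
    rcases sep_pair_cases huv hS with ⟨h1, h2⟩ | ⟨h1, h2⟩
    · exact key_ineq w hsymm hdiag u v huv hw m hm S h1 h2
    · have hX' : ({v, u} : Finset V) = X := by rw [hX, Finset.pair_comm]
      have hw' : 0 ≤ w v u := by rw [hsymm v u]; exact hw
      have hm' : ∀ T : Finset V, ¬ Separates T {v, u} → m ≤ cutVal w T := by
        intro T hT; exact hm T (hX' ▸ hT)
      have := key_ineq w hsymm hdiag v u huv.symm hw' m hm' S h1 h2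
      rw [hνdef, nuhat_symm w hsymm u v]
      exact this
  have hsep_ne : (cutVal w '' {S : Finset V | Separates S X}).Nonempty := by
    refine ⟨cutVal w {u}, {u}, ?_, rfl⟩
    constructor
    · intro h
      have hu : u ∈ X ∩ {u} := by
        simp [hX]
      rw [h] at hu
      exact absurd hu (Finset.notMem_empty u)
    · intro h
      have hv : v ∈ X ∩ {u} := by
        rw [h, hX]; simp
      rw [Finset.mem_inter, Finset.mem_singleton] at hv
      exact huv hv.2.symm
  have hsepInf : ν + m ≤ sInf (cutVal w '' {S : Finset V | Separates S X}) := by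
    apply le_csInf hsep_ne
    rintro y ⟨S, hS, rfl⟩
    exact hkey S hS
  constructor
  · rw [show nuIdx w {u, v} = sInf (cutVal w '' {S : Finset V | Separates S X}) - m from rfl]
    linarith
  · intro hpos S hSmin hSsep
    have h1 := hkey S hSsep
    obtain ⟨T0, hT0, hT0v⟩ := hne2.csInf_mem hfin2
    have h2 : minCutVal w ≤ m := by
      rw [hmdef, ← hT0v]
      exact csInf_le (Set.finite_range _).bddBelow ⟨T0, rfl⟩
    rw [hSmin] at h1
    have hpos' : 0 < ν := hpos
    linarith
end

section
/- Let G = (V, w) be a weighted graph and u, v distinct nodes with w(u,v) < 0. Define the fast score ν̂_f(u,v) = 2|w(u,v)| − min(‖w^(u)‖, ‖w^(v)‖) and the similarity score ν̂_s(u,v) = 2|w(u,v)| − (1/2)·Σ_{z∈V} |w(u,z) + w(v,z)|. If max(ν̂_f(u,v), ν̂_s(u,v)) > 0, then (u, v) is an antipolar pair, i.e., ν_G({u,v}) < 0, and hence every min-cut of G separates u and v. -/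
open Finset

variable {V : Type*}

lemma cut_compl [Fintype V] [DecidableEq V] (w : V → V → ℝ)
    (hsymm : ∀ a b, w a b = w b a) (S : Finset V) :
    cutVal w Sᶜ = cutVal w S := by
  unfold cutVal
  rw [compl_compl, Finset.sum_comm]
  exact Finset.sum_congr rfl fun x _ => Finset.sum_congr rfl fun y _ => (hsymm x y).symm

lemma cut_erase [Fintype V] [DecidableEq V] (w : V → V → ℝ)
    (S : Finset V) (a : V) (ha : a ∈ S) :
    cutVal w (S.erase a) = cutVal w S + (∑ x ∈ S.erase a, w x a) - ∑ y ∈ Sᶜ, w a y := by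
  unfold cutVal
  have hc : (S.erase a)ᶜ = insert a Sᶜ := by
    ext x
    simp only [Finset.mem_compl, Finset.mem_erase, Finset.mem_insert, not_and, not_not]
    tauto
  have hna : a ∉ Sᶜ := by simp [ha]
  rw [hc]
  rw [← Finset.sum_erase_add S _ ha]
  simp only [Finset.sum_insert hna]
  rw [Finset.sum_add_distrib]
  ring

lemma sep_iff [Fintype V] [DecidableEq V] {u v : V} (huv : u ≠ v) (S : Finset V) :
    Separates S {u, v} ↔ ((u ∈ S ∧ v ∉ S) ∨ (v ∈ S ∧ u ∉ S)) := by
  unfold Separates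
  rw [← Finset.nonempty_iff_ne_empty]
  constructor
  · rintro ⟨⟨x, hx⟩, hne⟩
    simp only [Finset.mem_inter, Finset.mem_insert, Finset.mem_singleton] at hx
    by_cases hu : u ∈ S <;> by_cases hv : v ∈ S
    · exact absurd (by ext y; simp only [Finset.mem_inter, Finset.mem_insert, Finset.mem_singleton]; constructor <;> intro h <;> [exact h.1; exact ⟨h, by rcases h with rfl|rfl <;> assumption⟩] : ({u,v} : Finset V) ∩ S = {u,v}) hne
    · exact Or.inl ⟨hu, hv⟩
    · exact Or.inr ⟨hv, hu⟩
    · rcases hx.1 with rfl | rfl <;> [exact absurd hx.2 hu; exact absurd hx.2 hv]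
  · rintro (⟨hu, hv⟩ | ⟨hv, hu⟩)
    · refine ⟨⟨u, by simp [hu]⟩, fun h => hv ?_⟩
      have hm : v ∈ ({u,v} : Finset V) ∩ S := by rw [h]; simp
      exact (Finset.mem_inter.mp hm).2
    · refine ⟨⟨v, by simp [hv]⟩, fun h => hu ?_⟩
      have hm : u ∈ ({u,v} : Finset V) ∩ S := by rw [h]; simp
      exact (Finset.mem_inter.mp hm).2

lemma diff_bound [Fintype V] [DecidableEq V] (w : V → V → ℝ)
    (hsymm : ∀ a b, w a b = w b a) {u v : V} (huv : u ≠ v) (hw : w u v < 0)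
    {S : Finset V} (hu : u ∈ S) :
    (∑ x ∈ S.erase v, w x v) - ∑ y ∈ Sᶜ, w v y ≤ (∑ z, |w v z|) - 2 * |w u v| := by
  have hu' : u ∈ S.erase v := Finset.mem_erase.mpr ⟨huv, hu⟩
  set A := (S.erase v).erase u with hA
  have h1 : ∑ x ∈ S.erase v, w x v = w u v + ∑ x ∈ A, w x v := by
    rw [← Finset.sum_erase_add _ _ hu', add_comm]
  have hdisj : Disjoint A Sᶜ := by
    refine Finset.disjoint_left.mpr fun x hx hxc => ?_
    exact (Finset.mem_compl.mp hxc) (Finset.mem_of_mem_erase (Finset.mem_of_mem_erase hx))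
  have huAB : u ∉ A ∪ Sᶜ := by
    simp only [Finset.mem_union, hA, Finset.mem_erase, Finset.mem_compl]
    push_neg
    exact ⟨fun h => absurd rfl h, hu⟩
  have h2 : ∑ x ∈ A, w x v ≤ ∑ x ∈ A, |w v x| :=
    Finset.sum_le_sum fun x _ => (hsymm x v) ▸ le_abs_self _
  have h3 : - ∑ y ∈ Sᶜ, w v y ≤ ∑ y ∈ Sᶜ, |w v y| := by
    rw [← Finset.sum_neg_distrib]
    exact Finset.sum_le_sum fun y _ => neg_le_abs _
  have h4 : |w v u| + ∑ z ∈ A ∪ Sᶜ, |w v z| ≤ ∑ z, |w v z| := by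
    have := Finset.sum_insert (f := fun z => |w v z|) huAB
    rw [← this]
    exact Finset.sum_le_sum_of_subset_of_nonneg (Finset.subset_univ _)
      (fun z _ _ => abs_nonneg _)
  rw [Finset.sum_union hdisj] at h4
  have habs : |w u v| = -(w u v) := abs_of_neg hw
  have habs' : |w v u| = -(w u v) := by rw [hsymm v u]; exact habs
  linarith

lemma diff2_bound [Fintype V] [DecidableEq V] (w : V → V → ℝ)
    (hsymm : ∀ a b, w a b = w b a) (hdiag : ∀ a, w a a = 0)
    {u v : V} (huv : u ≠ v) (hw : w u v < 0)
    {S : Finset V} (hu : u ∈ S) (hv : v ∈ S) :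
    ((∑ x ∈ S.erase v, w x v) - ∑ y ∈ Sᶜ, w v y) +
    ((∑ x ∈ S.erase u, w x u) - ∑ y ∈ Sᶜ, w u y) ≤
    (∑ z, |w u z + w v z|) - 4 * |w u v| := by
  have hu' : u ∈ S.erase v := Finset.mem_erase.mpr ⟨huv, hu⟩
  have hv' : v ∈ S.erase u := Finset.mem_erase.mpr ⟨huv.symm, hv⟩
  set T := (S.erase v).erase u with hT
  have hT' : (S.erase u).erase v = T := Finset.erase_right_comm
  have h1 : ∑ x ∈ S.erase v, w x v = w u v + ∑ x ∈ T, w x v := by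
    rw [← Finset.sum_erase_add _ _ hu', add_comm]
  have h2 : ∑ x ∈ S.erase u, w x u = w v u + ∑ x ∈ T, w x u := by
    rw [← Finset.sum_erase_add _ _ hv', add_comm, hT']
  have hdisj : Disjoint T Sᶜ := by
    refine Finset.disjoint_left.mpr fun x hx hxc => ?_
    exact (Finset.mem_compl.mp hxc) (Finset.mem_of_mem_erase (Finset.mem_of_mem_erase hx))
  have huT : u ∉ T ∪ Sᶜ := by
    simp only [Finset.mem_union, hT, Finset.mem_erase, Finset.mem_compl]
    push_neg
    exact ⟨fun h => absurd rfl h, hu⟩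
  have hvT : v ∉ insert u (T ∪ Sᶜ) := by
    simp only [Finset.mem_insert, Finset.mem_union, hT, Finset.mem_erase, Finset.mem_compl]
    push_neg
    exact ⟨huv.symm, fun _ h => absurd rfl h, hv⟩
  have h3 : ∑ x ∈ T, (w x u + w x v) ≤ ∑ x ∈ T, |w u x + w v x| :=
    Finset.sum_le_sum fun x _ => by rw [hsymm x u, hsymm x v]; exact le_abs_self _
  have h4 : - ∑ y ∈ Sᶜ, (w u y + w v y) ≤ ∑ y ∈ Sᶜ, |w u y + w v y| := by
    rw [← Finset.sum_neg_distrib]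
    exact Finset.sum_le_sum fun y _ => neg_le_abs _
  have h5 : |w u v + w v v| + (|w u u + w v u| + ∑ z ∈ T ∪ Sᶜ, |w u z + w v z|) ≤
      ∑ z, |w u z + w v z| := by
    have e1 := Finset.sum_insert (f := fun z => |w u z + w v z|) huT
    have e2 := Finset.sum_insert (f := fun z => |w u z + w v z|) hvT
    rw [← e1, ← e2]
    exact Finset.sum_le_sum_of_subset_of_nonneg (Finset.subset_univ _)
      (fun z _ _ => abs_nonneg _)
  rw [Finset.sum_union hdisj] at h5
  have habs : |w u v| = -(w u v) := abs_of_neg hw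
  have e3 : |w u v + w v v| = -(w u v) := by rw [hdiag v, add_zero]; exact habs
  have e4 : |w u u + w v u| = -(w u v) := by
    rw [hdiag u, zero_add, hsymm v u]; exact habs
  have e5 : w v u = w u v := hsymm v u
  have hsplit : ∑ x ∈ T, (w x u + w x v) = (∑ x ∈ T, w x u) + ∑ x ∈ T, w x v :=
    Finset.sum_add_distrib
  have hsplit2 : ∑ y ∈ Sᶜ, (w u y + w v y) = (∑ y ∈ Sᶜ, w u y) + ∑ y ∈ Sᶜ, w v y :=
    Finset.sum_add_distrib
  linarith

/-- Key step: if both `u,v` lie in `S`, a strictly better separating cut exists. -/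
lemma step_lemma [Fintype V] [DecidableEq V] (w : V → V → ℝ)
    (hsymm : ∀ a b, w a b = w b a) (hdiag : ∀ a, w a a = 0)
    {u v : V} (huv : u ≠ v) (hw : w u v < 0)
    {S : Finset V} (hu : u ∈ S) (hv : v ∈ S) :
    ∃ S' : Finset V, Separates S' {u, v} ∧
      cutVal w S' ≤ cutVal w S -
        max (2 * |w u v| - min (∑ z, |w u z|) (∑ z, |w v z|))
            (2 * |w u v| - (1 / 2) * ∑ z, |w u z + w v z|) := by
  have hw' : w v u < 0 := by rw [hsymm v u]; exact hw
  have habsuv : |w v u| = |w u v| := by rw [hsymm v u]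
  have hsepv : Separates (S.erase v) {u, v} :=
    (sep_iff huv _).mpr (Or.inl ⟨Finset.mem_erase.mpr ⟨huv, hu⟩, Finset.notMem_erase v S⟩)
  have hsepu : Separates (S.erase u) {u, v} :=
    (sep_iff huv _).mpr (Or.inr ⟨Finset.mem_erase.mpr ⟨huv.symm, hv⟩, Finset.notMem_erase u S⟩)
  have hev := cut_erase w S v hv
  have heu := cut_erase w S u hu
  have hbv := diff_bound w hsymm huv hw hu
  have hbu : (∑ x ∈ S.erase u, w x u) - ∑ y ∈ Sᶜ, w u y ≤ (∑ z, |w u z|) - 2 * |w u v| := by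
    have := diff_bound w hsymm huv.symm hw' hv
    rwa [habsuv] at this
  have hb2 := diff2_bound w hsymm hdiag huv hw hu hv
  rcases max_cases (2 * |w u v| - min (∑ z, |w u z|) (∑ z, |w v z|))
      (2 * |w u v| - (1 / 2) * ∑ z, |w u z + w v z|) with ⟨hmax, _⟩ | ⟨hmax, _⟩
  · rw [hmax]
    rcases min_cases (∑ z, |w u z|) (∑ z, |w v z|) with ⟨hmin, _⟩ | ⟨hmin, _⟩
    · exact ⟨S.erase u, hsepu, by rw [hmin]; linarith⟩
    · exact ⟨S.erase v, hsepv, by rw [hmin]; linarith⟩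
  · rw [hmax]
    rcases le_total (cutVal w (S.erase u)) (cutVal w (S.erase v)) with hle | hle
    · exact ⟨S.erase u, hsepu, by linarith⟩
    · exact ⟨S.erase v, hsepv, by linarith⟩

/-- for `w(u,v) < 0`, if `max(ν̂_f(u,v), ν̂_s(u,v)) > 0` where
`ν̂_f(u,v) = 2|w(u,v)| − min(‖w⁽ᵘ⁾‖, ‖w⁽ᵛ⁾‖)` and
`ν̂_s(u,v) = 2|w(u,v)| − ½ Σ_z |w(u,z) + w(v,z)|`, then `(u,v)` is an antipolar pair
(`ν_G({u,v}) < 0`) and every min-cut separates `u` and `v`. -/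
theorem statement_17 [Fintype V] [DecidableEq V] [Nonempty V]
    (w : V → V → ℝ) (hsymm : ∀ a b, w a b = w b a) (hdiag : ∀ a, w a a = 0)
    (u v : V) (huv : u ≠ v) (hw : w u v < 0)
    (hpos : 0 < max (2 * |w u v| - min (∑ z, |w u z|) (∑ z, |w v z|))
                    (2 * |w u v| - (1 / 2) * ∑ z, |w u z + w v z|)) :
    nuIdx w {u, v} < 0 ∧
    ∀ S : Finset V, cutVal w S = minCutVal w →
      ((u ∈ S ∧ v ∉ S) ∨ (v ∈ S ∧ u ∉ S)) := by
  set m := max (2 * |w u v| - min (∑ z, |w u z|) (∑ z, |w v z|))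
      (2 * |w u v| - (1 / 2) * ∑ z, |w u z + w v z|) with hm
  have key : ∀ S : Finset V, ¬ Separates S {u, v} →
      ∃ S' : Finset V, Separates S' {u, v} ∧ cutVal w S' ≤ cutVal w S - m := by
    intro S hns
    rw [sep_iff huv] at hns
    push_neg at hns
    by_cases hu : u ∈ S
    · by_cases hv : v ∈ S
      · exact step_lemma w hsymm hdiag huv hw hu hv
      · exact absurd hv (not_not.mpr (hns.1 hu))
    · by_cases hv : v ∈ S
      · exact absurd hu (not_not.mpr (hns.2 hv))
      · obtain ⟨S', hsep, hle⟩ := step_lemma w hsymm hdiag huv hw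
          (Finset.mem_compl.mpr hu) (Finset.mem_compl.mpr hv)
        exact ⟨S', hsep, by rwa [cut_compl w hsymm S] at hle⟩
  constructor
  · -- nuIdx < 0
    set A := cutVal w '' {S : Finset V | Separates S {u, v}} with hA
    set B := cutVal w '' {S : Finset V | ¬ Separates S {u, v}} with hB
    have hAfin : A.Finite := Set.Finite.image _ (Set.toFinite _)
    have hBfin : B.Finite := Set.Finite.image _ (Set.toFinite _)
    have hBne : B.Nonempty := by
      refine ⟨cutVal w ∅, ∅, fun h => ?_, rfl⟩
      exact h.1 (Finset.inter_empty _)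
    have hmem : sInf B ∈ B := Set.Nonempty.csInf_mem hBne hBfin
    obtain ⟨S0, hS0, hS0v⟩ := hmem
    obtain ⟨S', hsep, hle⟩ := key S0 hS0
    have hinfA : sInf A ≤ cutVal w S' :=
      csInf_le hAfin.bddBelow ⟨S', hsep, rfl⟩
    unfold nuIdx
    rw [← hA, ← hB, ← hS0v]
    linarith
  · intro S hmin
    by_contra h
    have hns : ¬ Separates S {u, v} := fun hs => h ((sep_iff huv S).mp hs)
    obtain ⟨S', _, hle⟩ := key S hns
    have hge : minCutVal w ≤ cutVal w S' :=
      csInf_le (Set.finite_range _).bddBelow ⟨S', rfl⟩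
    rw [hmin] at hle
    linarith
end
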